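/- Let c, d : ℤ × ℝ → ℝ be differentiable in x with c(n)d(n) < 0 for all n, and suppose ∂_x c(n) = c(n) c(n+1) d(n+1) and ∂_x d(n) = −d(n) d(n−1) c(n−1) for all n ∈ ℤ. Then q(n) = ln( −c(n) d(n) ) satisfies the Volterra equation ∂_x q(n) = −e^{q(n+1)} + e^{q(n−1)} for all n ∈ ℤ. -/

import Mathlib

/-- The constrained D∆mKP(E) x-flow yields the Volterra equation for
`q(n) = ln(-c(n)d(n))`. -/
theorem constrained_dDmKPE_volterra
    (c d : ℤ → ℝ → ℝ)
    (hneg : ∀ n x, c n x * d n x < 0)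
    (hc : ∀ n x, HasDerivAt (c n) (c n x * c (n + 1) x * d (n + 1) x) x)
    (hd : ∀ n x, HasDerivAt (d n) (-(d n x * d (n - 1) x * c (n - 1) x)) x) :
    let q : ℤ → ℝ → ℝ := fun n x => Real.log (-(c n x * d n x))
    ∀ n x, HasDerivAt (q n)
      (-Real.exp (q (n + 1) x) + Real.exp (q (n - 1) x)) x := by
  intro q n x
  have hprod : HasDerivAt (fun y => -(c n y * d n y))
      (-(c n x * c (n + 1) x * d (n + 1) x * d n x
        + c n x * -(d n x * d (n - 1) x * c (n - 1) x))) x :=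
    (((hc n x).mul (hd n x))).neg
  have hne : -(c n x * d n x) ≠ 0 := by nlinarith [hneg n x]
  have hlog := hprod.log hne
  have hexp1 : Real.exp (q (n + 1) x) = -(c (n + 1) x * d (n + 1) x) := by
    simp only [q]
    exact Real.exp_log (by nlinarith [hneg (n + 1) x])
  have hexp2 : Real.exp (q (n - 1) x) = -(c (n - 1) x * d (n - 1) x) := by
    simp only [q]
    exact Real.exp_log (by nlinarith [hneg (n - 1) x])
  have heq : (-(c n x * c (n + 1) x * d (n + 1) x * d n x
        + c n x * -(d n x * d (n - 1) x * c (n - 1) x))) / (-(c n x * d n x))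
      = -Real.exp (q (n + 1) x) + Real.exp (q (n - 1) x) := by
    rw [hexp1, hexp2]
    field_simp [left_ne_zero_of_mul (hneg n x).ne, right_ne_zero_of_mul (hneg n x).ne]
  rw [← heq]
  exact hlog
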